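/- Let (Ω, P) be a probability space with events A (being accepted after improvement), R (being rejected), and Z (belonging to group z), with P(R ∩ Z) > 0 and P(A ∩ R) > 0 and P(R) > 0 and P(Z) > 0. If P(A | R ∩ Z) = P(A | R) (equal improvability) and P(A ∩ R | Z) = P(A ∩ R) (bounded effort), then P(R | Z) = P(R) (demographic parity on rejection). -/
import Mathlib

open MeasureTheory ProbabilityTheory

/-- EI ∧ BE ⇒ DP (Theorem 1, direction 1). -/
theorem ei_and_be_implies_dp {Ω : Type*} [MeasurableSpace Ω] (P : Measure Ω)
    [IsProbabilityMeasure P] (A R Z : Set Ω)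
    (hA : MeasurableSet A) (hR : MeasurableSet R) (hZ : MeasurableSet Z)
    (hRZ : 0 < P (R ∩ Z)) (hAR : 0 < P (A ∩ R)) (hRpos : 0 < P R) (hZpos : 0 < P Z)
    (hEI : (P[|R ∩ Z]) A = (P[|R]) A)
    (hBE : (P[|Z]) (A ∩ R) = P (A ∩ R)) :
    (P[|Z]) R = P R := by
  have hne : ∀ s : Set Ω, P s ≠ ⊤ := fun s => measure_ne_top P s
  rw [cond_apply (hR.inter hZ)] at hEI
  rw [cond_apply hR] at hEI
  rw [cond_apply hZ] at hBE
  rw [cond_apply hZ]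
  have h1 : Z ∩ (A ∩ R) = (R ∩ Z) ∩ A := by ext x; simp; tauto
  have h2 : Z ∩ R = R ∩ Z := Set.inter_comm _ _
  have h3 : R ∩ A = A ∩ R := Set.inter_comm _ _
  rw [h1] at hBE
  rw [h2]
  rw [h3] at hEI
  have ha : P ((R ∩ Z) ∩ A) = P Z * P (A ∩ R) := by
    rw [← hBE, ← mul_assoc, ENNReal.mul_inv_cancel hZpos.ne' (hne Z), one_mul]
  rw [ha] at hEI
  have key : (P (R ∩ Z))⁻¹ * P Z = (P R)⁻¹ := by
    have h : P (A ∩ R) * ((P (R ∩ Z))⁻¹ * P Z) = P (A ∩ R) * (P R)⁻¹ := by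
      calc P (A ∩ R) * ((P (R ∩ Z))⁻¹ * P Z) = (P (R ∩ Z))⁻¹ * (P Z * P (A ∩ R)) := by ring
        _ = (P R)⁻¹ * P (A ∩ R) := hEI
        _ = P (A ∩ R) * (P R)⁻¹ := by ring
    exact (ENNReal.mul_right_inj hAR.ne' (hne _)).mp h
  have := congrArg (·⁻¹) key
  simp only [ENNReal.mul_inv (Or.inr (hne Z)) (Or.inl (ENNReal.inv_ne_top.mpr hRZ.ne')),
    inv_inv] at this
  rw [mul_comm] at this
  exact this
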